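/- Consider the planar ODE system da/dt = ω - a(a² - δ), dω/dt = a‖β*‖² - a²ω. The open positive orthant O⁺ = {(a,ω) : a > 0, ω > 0} and the open negative orthant O⁻ = {(a,ω) : a < 0, ω < 0} are positively invariant sets; consequently, if (a(0), ω(0)) ≠ (0,0), then the product a(t)·ω(t) changes sign at most once for t ≥ 0. -/

import Mathlib

open Set Filter Real Topology

/-- Gronwall-type monotonicity helper: if `f' + K f ≥ 0` on `(s,t)`, then
`f s * exp (K s) ≤ f t * exp (K t)`. -/
lemma mono_aux (f f' : ℝ → ℝ) (s t K : ℝ) (hst : s ≤ t)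
    (hf : ∀ r, HasDerivAt f (f' r) r)
    (h : ∀ r ∈ Ioo s t, 0 ≤ f' r + K * f r) :
    f s * Real.exp (K * s) ≤ f t * Real.exp (K * t) := by
  set g : ℝ → ℝ := fun r => f r * Real.exp (K * r) with hg
  have hg' : ∀ r, HasDerivAt g ((f' r + K * f r) * Real.exp (K * r)) r := by
    intro r
    have he : HasDerivAt (fun r : ℝ => Real.exp (K * r)) (K * Real.exp (K * r)) r := by
      simpa [mul_comm] using ((hasDerivAt_id r).const_mul K).exp
    have := (hf r).mul he
    refine this.congr_deriv ?_
    ring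
  have hmono : MonotoneOn g (Icc s t) := by
    apply monotoneOn_of_hasDerivWithinAt_nonneg (convex_Icc s t)
      (fun r _ => (hg' r).continuousAt.continuousWithinAt)
      (f' := fun r => (f' r + K * f r) * Real.exp (K * r))
    · intro r hr
      exact (hg' r).hasDerivWithinAt
    · intro r hr
      rw [interior_Icc] at hr
      exact mul_nonneg (h r hr) (Real.exp_pos _).le
  exact hmono ⟨le_rfl, hst⟩ ⟨hst, le_rfl⟩ hst

/-- If `f t₀ = 0` and `f' t₀ > 0`, then `f > 0` just after `t₀`. -/
lemma pos_after (f : ℝ → ℝ) (t₀ d : ℝ) (hf : HasDerivAt f d t₀) (h0 : f t₀ = 0)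
    (hd : 0 < d) : ∀ᶠ s in 𝓝[>] t₀, 0 < f s := by
  have hs : Filter.Tendsto (slope f t₀) (𝓝[≠] t₀) (𝓝 d) :=
    hasDerivAt_iff_tendsto_slope.mp hf
  have hev : ∀ᶠ s in 𝓝[≠] t₀, 0 < slope f t₀ s := hs.eventually (eventually_gt_nhds hd)
  have hle : 𝓝[>] t₀ ≤ 𝓝[≠] t₀ := nhdsWithin_mono _ (fun x hx => ne_of_gt hx)
  filter_upwards [hle hev, self_mem_nhdsWithin] with s hsl hsm
  have hst : (0:ℝ) < s - t₀ := sub_pos.mpr hsm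
  have : 0 < (f s - f t₀) / (s - t₀) := by
    simpa [slope_def_field, div_eq_iff hst.ne' ] using hsl
  have := mul_pos this hst
  rw [div_mul_cancel₀ _ hst.ne'] at this
  linarith [h0 ▸ this]

/-- Positive-orthant invariance for the system. -/
lemma orthant_pos (δ b : ℝ) (hb : 0 < b) (a ω : ℝ → ℝ)
    (ha : ∀ t, HasDerivAt a (ω t - a t * ((a t)^2 - δ)) t)
    (hω : ∀ t, HasDerivAt ω (a t * b^2 - (a t)^2 * ω t) t) :
    ∀ s t : ℝ, s ≤ t → (0 < a s ∧ 0 < ω s) → (0 < a t ∧ 0 < ω t) := by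
  intro s t hst ⟨has, hωs⟩
  by_contra hcon
  -- bound on |a| on [s,t]
  have hca : Continuous a := continuous_iff_continuousAt.mpr fun r => (ha r).continuousAt
  have hcω : Continuous ω := continuous_iff_continuousAt.mpr fun r => (hω r).continuousAt
  obtain ⟨C, hC⟩ := isCompact_Icc.exists_bound_of_continuousOn (s := Icc s t)
    hca.continuousOn
  set K : ℝ := C^2 + |δ| + 1 with hK
  -- the bad set
  set B : Set ℝ := {r ∈ Icc s t | a r ≤ 0 ∨ ω r ≤ 0} with hB
  have hBt : t ∈ B := by
    refine ⟨⟨hst, le_rfl⟩, ?_⟩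
    rcases le_or_gt (a t) 0 with h | h
    · exact Or.inl h
    · exact Or.inr (le_of_not_gt fun h2 => hcon ⟨h, h2⟩)
  have hBne : B.Nonempty := ⟨t, hBt⟩
  have hBbdd : BddBelow B := ⟨s, fun r hr => hr.1.1⟩
  have hBclosed : IsClosed B := by
    have : B = Icc s t ∩ ({r | a r ≤ 0} ∪ {r | ω r ≤ 0}) := by
      ext r; simp [hB, Set.mem_setOf_eq, and_or_left]
    rw [this]
    exact isClosed_Icc.inter ((isClosed_le hca continuous_const).union
      (isClosed_le hcω continuous_const))
  set τ : ℝ := sInf B with hτ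
  have hτB : τ ∈ B := hBclosed.csInf_mem hBne hBbdd
  have hτIcc : τ ∈ Icc s t := hτB.1
  have hτne : τ ≠ s := by
    intro h
    rcases hτB.2 with h1 | h1
    · rw [h] at h1; linarith
    · rw [h] at h1; linarith
  have hsτ : s < τ := lt_of_le_of_ne hτIcc.1 (Ne.symm hτne)
  -- on (s, τ), a and ω are positive
  have hposIoo : ∀ r ∈ Ioo s τ, 0 < a r ∧ 0 < ω r := by
    intro r hr
    by_contra h
    push_neg at h
    have hrB : r ∈ B := by
      refine ⟨⟨hr.1.le, hr.2.le.trans hτIcc.2⟩, ?_⟩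
      rcases le_or_gt (a r) 0 with h1 | h1
      · exact Or.inl h1
      · exact Or.inr (h h1)
    exact absurd (csInf_le hBbdd hrB) (not_le.mpr hr.2)
  -- apply mono_aux to a and ω on [s, τ]
  have hKb : ∀ r ∈ Icc s t, (a r)^2 ≤ C^2 := by
    intro r hr
    have := hC r hr
    rw [Real.norm_eq_abs] at this
    nlinarith [abs_nonneg (a r), sq_abs (a r)]
  have haτ : 0 < a τ := by
    have := mono_aux a (fun r => ω r - a r * ((a r)^2 - δ)) s τ K hsτ.le ha ?_
    · have h2 : 0 < a τ * Real.exp (K * τ) :=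
        lt_of_lt_of_le (mul_pos has (Real.exp_pos _)) this
      nlinarith [Real.exp_pos (K * τ)]
    · intro r hr
      obtain ⟨h1, h2⟩ := hposIoo r hr
      have hb2 : (a r)^2 ≤ C^2 := hKb r ⟨hr.1.le, hr.2.le.trans hτIcc.2⟩
      have hKge : (a r)^2 - δ ≤ K - 1 := by
        rw [hK]; nlinarith [neg_abs_le δ]
      show 0 ≤ ω r - a r * ((a r)^2 - δ) + K * a r
      nlinarith [mul_nonneg h1.le (by linarith : (0:ℝ) ≤ K - ((a r)^2 - δ))]
  have hωτ : 0 < ω τ := by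
    have := mono_aux ω (fun r => a r * b^2 - (a r)^2 * ω r) s τ K hsτ.le hω ?_
    · have h2 : 0 < ω τ * Real.exp (K * τ) :=
        lt_of_lt_of_le (mul_pos hωs (Real.exp_pos _)) this
      nlinarith [Real.exp_pos (K * τ)]
    · intro r hr
      obtain ⟨h1, h2⟩ := hposIoo r hr
      have hb2 : (a r)^2 ≤ C^2 := hKb r ⟨hr.1.le, hr.2.le.trans hτIcc.2⟩
      have hKge : (a r)^2 ≤ K - 1 := by rw [hK]; nlinarith [abs_nonneg δ]
      show 0 ≤ a r * b^2 - (a r)^2 * ω r + K * ω r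
      nlinarith [mul_nonneg h2.le (by linarith : (0:ℝ) ≤ K - (a r)^2),
        mul_pos h1 (pow_pos hb 2)]
  rcases hτB.2 with h | h <;> linarith

/-- The energy `b² a² + ω²` stays positive forward in time. -/
lemma energy_pos (δ b : ℝ) (hb : 0 < b) (a ω : ℝ → ℝ)
    (ha : ∀ t, HasDerivAt a (ω t - a t * ((a t)^2 - δ)) t)
    (hω : ∀ t, HasDerivAt ω (a t * b^2 - (a t)^2 * ω t) t)
    (t : ℝ) (ht : 0 ≤ t) (h0 : 0 < b^2 * (a 0)^2 + (ω 0)^2) :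
    0 < b^2 * (a t)^2 + (ω t)^2 := by
  have hca : Continuous a := continuous_iff_continuousAt.mpr fun r => (ha r).continuousAt
  have hcω : Continuous ω := continuous_iff_continuousAt.mpr fun r => (hω r).continuousAt
  obtain ⟨C, hC⟩ := isCompact_Icc.exists_bound_of_continuousOn (s := Icc 0 t)
    hca.continuousOn
  obtain ⟨D, hD⟩ := isCompact_Icc.exists_bound_of_continuousOn (s := Icc 0 t)
    hcω.continuousOn
  have hMpos : (0:ℝ) < b^2 * (C^2 + |δ|) + D^2 + 1 := by positivity
  set M : ℝ := b^2 * (C^2 + |δ|) + D^2 + 1 with hM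
  set K : ℝ := 2*b + 2*M/b^2 with hK
  clear_value M K
  have hdE : ∀ r, HasDerivAt (fun r => b^2 * (a r)^2 + (ω r)^2)
      (2 * b^2 * a r * (ω r - a r * ((a r)^2 - δ))
        + 2 * ω r * (a r * b^2 - (a r)^2 * ω r)) r := by
    intro r
    have h1 : HasDerivAt (fun r => b^2 * (a r)^2)
        (2 * b^2 * a r * (ω r - a r * ((a r)^2 - δ))) r := by
      have := ((ha r).pow 2).const_mul (b^2)
      refine this.congr_deriv ?_
      ring
    have h2 : HasDerivAt (fun r => (ω r)^2)
        (2 * ω r * (a r * b^2 - (a r)^2 * ω r)) r := by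
      have := (hω r).pow 2
      refine this.congr_deriv ?_
      ring
    exact h1.add h2
  have key := mono_aux (fun r => b^2 * (a r)^2 + (ω r)^2)
      (fun r => 2 * b^2 * a r * (ω r - a r * ((a r)^2 - δ))
        + 2 * ω r * (a r * b^2 - (a r)^2 * ω r)) 0 t K ht hdE ?_
  · have key' : (b^2 * (a 0)^2 + (ω 0)^2) * Real.exp (K * 0)
        ≤ (b^2 * (a t)^2 + (ω t)^2) * Real.exp (K * t) := key
    nlinarith [Real.exp_pos (K * t), Real.exp_pos (K * 0),
      mul_pos h0 (Real.exp_pos (K * 0))]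
  · intro r hr
    have hrIcc : r ∈ Icc 0 t := ⟨hr.1.le, hr.2.le⟩
    have hCa : |a r| ≤ C := by simpa [Real.norm_eq_abs] using hC r hrIcc
    have ha2 : (a r)^2 ≤ C^2 := by nlinarith [abs_nonneg (a r), sq_abs (a r)]
    have hCω : |ω r| ≤ D := by simpa [Real.norm_eq_abs] using hD r hrIcc
    have hω2 : (ω r)^2 ≤ D^2 := by nlinarith [abs_nonneg (ω r), sq_abs (ω r)]
    have hsq : (0:ℝ) ≤ 2*b*(b * a r + ω r)^2 := by positivity
    have hbd : b^2*((a r)^2 - δ) + (ω r)^2 ≤ M := by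
      rw [hM]
      nlinarith [neg_abs_le δ,
        mul_le_mul_of_nonneg_left (by linarith [neg_abs_le δ] : (a r)^2 - δ ≤ C^2 + |δ|)
          (sq_nonneg b)]
    have h3 : 2*(a r)^2 * (b^2*((a r)^2 - δ) + (ω r)^2) ≤ 2*(a r)^2 * M :=
      mul_le_mul_of_nonneg_left hbd (by positivity)
    have h4 : 2*(a r)^2 * M ≤ (2*M/b^2) * (b^2 * (a r)^2 + (ω r)^2) := by
      have hEa : b^2 * (a r)^2 ≤ b^2 * (a r)^2 + (ω r)^2 := by nlinarith [sq_nonneg (ω r)]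
      have heq : (2*M/b^2) * (b^2 * (a r)^2) = 2*(a r)^2*M := by
        field_simp
      rw [← heq]
      exact mul_le_mul_of_nonneg_left hEa (by positivity)
    have h5 : -(2*b) * (b^2 * (a r)^2 + (ω r)^2) ≤ 4*b^2*(a r)*(ω r) := by
      nlinarith [hsq]
    show (0:ℝ) ≤ 2 * b^2 * a r * (ω r - a r * ((a r)^2 - δ))
        + 2 * ω r * (a r * b^2 - (a r)^2 * ω r)
        + K * (b^2 * (a r)^2 + (ω r)^2)
    rw [hK]
    linarith [h3, h4, h5]

theorem orthant_invariance_and_single_crossing (δ b : ℝ) (hb : 0 < b)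
    (a ω : ℝ → ℝ)
    (ha : ∀ t, HasDerivAt a (ω t - a t * ((a t)^2 - δ)) t)
    (hω : ∀ t, HasDerivAt ω (a t * b^2 - (a t)^2 * ω t) t) :
    (∀ s t : ℝ, s ≤ t → (0 < a s ∧ 0 < ω s) → (0 < a t ∧ 0 < ω t)) ∧
    (∀ s t : ℝ, s ≤ t → (a s < 0 ∧ ω s < 0) → (a t < 0 ∧ ω t < 0)) ∧
    ((a 0, ω 0) ≠ ((0 : ℝ), (0 : ℝ)) →
      {t : ℝ | 0 ≤ t ∧ a t * ω t = 0}.Subsingleton) := by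
  have hpos := orthant_pos δ b hb a ω ha hω
  -- negative orthant via the symmetry (a, ω) ↦ (-a, -ω)
  have hna : ∀ t, HasDerivAt (fun t => -a t)
      ((fun t => -ω t) t - (fun t => -a t) t * (((fun t => -a t) t)^2 - δ)) t := by
    intro t
    have := (ha t).neg
    refine this.congr_deriv ?_
    beta_reduce; ring
  have hnω : ∀ t, HasDerivAt (fun t => -ω t)
      ((fun t => -a t) t * b^2 - ((fun t => -a t) t)^2 * ((fun t => -ω t) t)) t := by
    intro t
    have := (hω t).neg
    refine this.congr_deriv ?_
    beta_reduce; ring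
  have hneg : ∀ s t : ℝ, s ≤ t → (a s < 0 ∧ ω s < 0) → (a t < 0 ∧ ω t < 0) := by
    intro s t hst ⟨h1, h2⟩
    have := orthant_pos δ b hb (fun t => -a t) (fun t => -ω t) hna hnω s t hst
      ⟨(neg_pos.mpr h1 : (0:ℝ) < -a s), (neg_pos.mpr h2 : (0:ℝ) < -ω s)⟩
    have r1 : (0:ℝ) < -a t := this.1
    have r2 : (0:ℝ) < -ω t := this.2
    exact ⟨by linarith, by linarith⟩
  refine ⟨hpos, hneg, ?_⟩
  intro h0
  have hne : a 0 ≠ 0 ∨ ω 0 ≠ 0 := by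
    by_contra hc; push_neg at hc
    exact h0 (by simp [Prod.ext_iff, hc.1, hc.2])
  have hE0 : 0 < b^2 * (a 0)^2 + (ω 0)^2 := by
    rcases hne with h | h
    · have h2 : 0 < |a 0|^2 := pow_pos (abs_pos.mpr h) 2
      rw [sq_abs] at h2
      nlinarith [sq_nonneg (ω 0), pow_pos hb 2]
    · have h2 : 0 < |ω 0|^2 := pow_pos (abs_pos.mpr h) 2
      rw [sq_abs] at h2
      nlinarith [sq_nonneg (a 0), sq_nonneg (b * a 0)]
  have key : ∀ x y : ℝ, 0 ≤ x → a x * ω x = 0 → 0 ≤ y → a y * ω y = 0 → x < y → False := by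
    intro x y hx0 hxz hy0 hyz hlt
    have hEx : 0 < b^2 * (a x)^2 + (ω x)^2 := energy_pos δ b hb a ω ha hω x hx0 hE0
    have hca : Continuous a := continuous_iff_continuousAt.mpr fun r => (ha r).continuousAt
    have hcω : Continuous ω := continuous_iff_continuousAt.mpr fun r => (hω r).continuousAt
    have hIoc : Ioc x y ∈ 𝓝[>] x := Ioc_mem_nhdsGT hlt
    -- helper to finish in the positive case
    have finish_pos : (∀ᶠ s in 𝓝[>] x, 0 < a s) → (∀ᶠ s in 𝓝[>] x, 0 < ω s) → False := by
      intro e1 e2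
      obtain ⟨s, hs1, hs2, hs3⟩ := (e1.and (e2.and hIoc)).exists
      obtain ⟨hay, hωy⟩ := hpos s y hs3.2 ⟨hs1, hs2⟩
      exact absurd hyz (ne_of_gt (mul_pos hay hωy))
    have finish_neg : (∀ᶠ s in 𝓝[>] x, a s < 0) → (∀ᶠ s in 𝓝[>] x, ω s < 0) → False := by
      intro e1 e2
      obtain ⟨s, hs1, hs2, hs3⟩ := (e1.and (e2.and hIoc)).exists
      obtain ⟨hay, hωy⟩ := hneg s y hs3.2 ⟨hs1, hs2⟩
      exact absurd hyz (ne_of_gt (mul_pos_of_neg_of_neg hay hωy))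
    rcases mul_eq_zero.mp hxz with hax | hωx
    · -- a x = 0, so ω x ≠ 0
      have hωne : ω x ≠ 0 := by
        intro h; rw [hax, h] at hEx; simp at hEx
      rcases hωne.lt_or_gt with hωneg | hωpos
      · -- ω x < 0 : a' x = ω x < 0
        have hd : HasDerivAt a (ω x) x := by
          have := ha x; rw [hax] at this; simpa using this
        have e1 : ∀ᶠ s in 𝓝[>] x, a s < 0 := by
          have := pos_after (fun s => -a s) x (-(ω x)) hd.neg (by simp [hax])
            (by linarith)
          filter_upwards [this] with s hs; linarith
        have e2 : ∀ᶠ s in 𝓝[>] x, ω s < 0 :=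
          nhdsWithin_le_nhds (hcω.continuousAt.eventually_lt continuousAt_const hωneg)
        exact finish_neg e1 e2
      · have hd : HasDerivAt a (ω x) x := by
          have := ha x; rw [hax] at this; simpa using this
        have e1 : ∀ᶠ s in 𝓝[>] x, 0 < a s := pos_after a x (ω x) hd hax hωpos
        have e2 : ∀ᶠ s in 𝓝[>] x, 0 < ω s :=
          nhdsWithin_le_nhds (continuousAt_const.eventually_lt hcω.continuousAt hωpos)
        exact finish_pos e1 e2
    · -- ω x = 0, so a x ≠ 0
      have hane : a x ≠ 0 := by
        intro h; rw [hωx, h] at hEx; simp at hEx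
      have hd : HasDerivAt ω (a x * b^2) x := by
        have := hω x; rw [hωx] at this; simpa using this
      rcases hane.lt_or_gt with haneg | hapos
      · have e2 : ∀ᶠ s in 𝓝[>] x, ω s < 0 := by
          have := pos_after (fun s => -ω s) x (-(a x * b^2)) hd.neg (by simp [hωx])
            (by nlinarith)
          filter_upwards [this] with s hs; linarith
        have e1 : ∀ᶠ s in 𝓝[>] x, a s < 0 :=
          nhdsWithin_le_nhds (hca.continuousAt.eventually_lt continuousAt_const haneg)
        exact finish_neg e1 e2
      · have e2 : ∀ᶠ s in 𝓝[>] x, 0 < ω s := pos_after ω x (a x * b^2) hd hωx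
          (by nlinarith)
        have e1 : ∀ᶠ s in 𝓝[>] x, 0 < a s :=
          nhdsWithin_le_nhds (continuousAt_const.eventually_lt hca.continuousAt hapos)
        exact finish_pos e1 e2
  intro x hx y hy
  rcases lt_trichotomy x y with h | h | h
  · exact (key x y hx.1 hx.2 hy.1 hy.2 h).elim
  · exact h
  · exact (key y x hy.1 hy.2 hx.1 hx.2 h).elim
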